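/- Let H ∈ (0, 1/2) and define R_H(s,t) = (1/2)·( s^{2H} + t^{2H} − |t−s|^{2H} ) for s,t ≥ 0. Then there exists a constant C_H > 0, depending only on H, such that for every integer n ≥ 1: sup_{t ∈ [0,1]} Σ_{k=0}^{n−1} | R_H(t, (k+1)/n) − R_H(t, k/n) | ≤ C_H. -/

import Mathlib

/-- Covariance function of fractional Brownian motion with Hurst parameter `H`. -/
noncomputable def fbmCov (H : ℝ) (s t : ℝ) : ℝ :=
  (1 / 2) * (s ^ (2 * H) + t ^ (2 * H) - |t - s| ^ (2 * H))

theorem fbm_increment_inner_product_sum_bound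
    (H : ℝ) (hH : H ∈ Set.Ioo (0 : ℝ) (1 / 2)) :
    ∃ C : ℝ, 0 < C ∧ ∀ n : ℕ, 1 ≤ n → ∀ t ∈ Set.Icc (0 : ℝ) 1,
      ∑ k ∈ Finset.range n,
        |fbmCov H t ((k + 1 : ℝ) / n) - fbmCov H t ((k : ℝ) / n)| ≤ C := by
  obtain ⟨hH0, hH1⟩ := hH
  set p := 2 * H with hp_def
  have hp : 0 < p := by positivity
  refine ⟨2, by norm_num, ?_⟩
  intro n hn t ht
  obtain ⟨ht0, ht1⟩ := ht
  have hn0 : (0:ℝ) < n := by exact_mod_cast hn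
  set a : ℕ → ℝ := fun k => (k : ℝ) / n with ha
  have ha_nonneg : ∀ k, 0 ≤ a k := fun k => by positivity
  have ha_mono : ∀ j k : ℕ, j ≤ k → a j ≤ a k := by
    intro j k hjk
    simp only [ha]
    have : (j:ℝ) ≤ (k:ℝ) := by exact_mod_cast hjk
    gcongr
  -- decomposition of |x - t|^p
  have habs : ∀ x : ℝ, |x - t| ^ p = max (x - t) 0 ^ p + max (t - x) 0 ^ p := by
    intro x
    rcases le_total t x with h | h
    · rw [abs_of_nonneg (by linarith), max_eq_left (by linarith),
        max_eq_right (by linarith), Real.zero_rpow hp.ne', add_zero]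
    · rw [abs_of_nonpos (by linarith), neg_sub, max_eq_right (by linarith),
        max_eq_left (by linarith), Real.zero_rpow hp.ne', zero_add]
  set u : ℕ → ℝ := fun k => max (a k - t) 0 ^ p with hu
  set w : ℕ → ℝ := fun k => max (t - a k) 0 ^ p with hw
  have hu_mono : ∀ k, u k ≤ u (k+1) := by
    intro k
    apply Real.rpow_le_rpow (le_max_right _ _) _ hp.le
    exact max_le_max (by linarith [ha_mono k (k+1) (Nat.le_succ k)]) le_rfl
  have hw_mono : ∀ k, w (k+1) ≤ w k := by
    intro k
    apply Real.rpow_le_rpow (le_max_right _ _) _ hp.le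
    exact max_le_max (by linarith [ha_mono k (k+1) (Nat.le_succ k)]) le_rfl
  -- per-term bound
  have hterm : ∀ k : ℕ,
      |fbmCov H t ((k + 1 : ℝ) / n) - fbmCov H t ((k : ℝ) / n)| ≤
        (1/2) * ((a (k+1) ^ p - a k ^ p) + (u (k+1) - u k) + (w k - w (k+1))) := by
    intro k
    have hcast : ((k + 1 : ℝ)) / n = a (k+1) := by push_cast [ha]; ring
    have hcast2 : ((k : ℝ)) / n = a k := rfl
    rw [hcast, hcast2]
    have hmono : a k ^ p ≤ a (k+1) ^ p :=
      Real.rpow_le_rpow (ha_nonneg k) (ha_mono k (k+1) (Nat.le_succ k)) hp.le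
    have h1 : fbmCov H t (a (k+1)) - fbmCov H t (a k) =
        (1/2) * ((a (k+1) ^ p - a k ^ p) - ((u (k+1) + w (k+1)) - (u k + w k))) := by
      simp only [fbmCov, ← hp_def, hu, hw, habs]
      ring
    rw [h1, abs_mul, abs_of_nonneg (by norm_num : (0:ℝ) ≤ 1/2)]
    have h2 : |(a (k+1) ^ p - a k ^ p) - ((u (k+1) + w (k+1)) - (u k + w k))| ≤
        (a (k+1) ^ p - a k ^ p) + (u (k+1) - u k) + (w k - w (k+1)) := by
      have t1 : |a (k+1) ^ p - a k ^ p| = a (k+1) ^ p - a k ^ p :=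
        abs_of_nonneg (by linarith)
      have t2 : |(u (k+1) + w (k+1)) - (u k + w k)| ≤ (u (k+1) - u k) + (w k - w (k+1)) := by
        have : (u (k+1) + w (k+1)) - (u k + w k) = (u (k+1) - u k) + (w (k+1) - w k) := by ring
        rw [this]
        calc |(u (k+1) - u k) + (w (k+1) - w k)| ≤ |u (k+1) - u k| + |w (k+1) - w k| :=
              abs_add_le _ _
          _ = (u (k+1) - u k) + (w k - w (k+1)) := by
              rw [abs_of_nonneg (by linarith [hu_mono k]),
                abs_of_nonpos (by linarith [hw_mono k]), neg_sub]
      calc |(a (k+1) ^ p - a k ^ p) - ((u (k+1) + w (k+1)) - (u k + w k))| ≤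
            |a (k+1) ^ p - a k ^ p| + |(u (k+1) + w (k+1)) - (u k + w k)| := abs_sub _ _
        _ ≤ (a (k+1) ^ p - a k ^ p) + (u (k+1) - u k) + (w k - w (k+1)) := by
            rw [t1]; linarith
    nlinarith [h2]
  calc ∑ k ∈ Finset.range n,
        |fbmCov H t ((k + 1 : ℝ) / n) - fbmCov H t ((k : ℝ) / n)|
      ≤ ∑ k ∈ Finset.range n,
        (1/2) * ((a (k+1) ^ p - a k ^ p) + (u (k+1) - u k) + (w k - w (k+1))) :=
        Finset.sum_le_sum fun k _ => hterm k
    _ = (1/2) * ((a n ^ p - a 0 ^ p) + (u n - u 0) + (w 0 - w n)) := by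
        rw [← Finset.mul_sum]
        congr 1
        have e1 : ∑ k ∈ Finset.range n, (a (k+1) ^ p - a k ^ p) = a n ^ p - a 0 ^ p :=
          Finset.sum_range_sub (fun k => a k ^ p) n
        have e2 : ∑ k ∈ Finset.range n, (u (k+1) - u k) = u n - u 0 :=
          Finset.sum_range_sub u n
        have e3 : ∑ k ∈ Finset.range n, (w k - w (k+1)) = w 0 - w n :=
          Finset.sum_range_sub' w n
        rw [← e1, ← e2, ← e3, ← Finset.sum_add_distrib, ← Finset.sum_add_distrib]
    _ ≤ 2 := by
        have han : a n = 1 := by simp only [ha]; exact div_self hn0.ne'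
        have ha0 : a 0 = 0 := by simp [ha]
        have h1 : a n ^ p = 1 := by rw [han, Real.one_rpow]
        have h2 : a 0 ^ p = 0 := by rw [ha0, Real.zero_rpow hp.ne']
        have h3 : u 0 = 0 := by
          simp only [hu, ha0, zero_sub, max_eq_right (neg_nonpos.mpr ht0),
            Real.zero_rpow hp.ne']
        have h4 : u n ≤ 1 := by
          apply Real.rpow_le_one (le_max_right _ _) _ hp.le
          rw [han]; exact max_le (by linarith) (by norm_num)
        have h5 : w 0 ≤ 1 := by
          apply Real.rpow_le_one (le_max_right _ _) _ hp.le
          rw [ha0]; exact max_le (by linarith) (by norm_num)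
        have h6 : 0 ≤ w n := Real.rpow_nonneg (le_max_right _ _) p
        rw [h1, h2]
        linarith
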